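/- Let δ be a real number and let t, N be natural numbers with t ≥ 1 and N > 2t. Let u and w be lists of real numbers of length N, and suppose there exists a permutation e of {0,…,N−1} such that u[i] + δ ≤ w[e(i)] for every index i. Let u' (resp. w') be the list obtained from the nondecreasing sorting of u (resp. w) by deleting its first t entries and its last t entries, so that u' and w' have length N − 2t. Then for every nonempty finite set S of indices in {0,…,N−2t−1}, (∑_{i∈S} u'[i]) / |S| + δ ≤ (∑_{i∈S} w'[i]) / |S|. -/

import Mathlib

open List

lemma ofFn_getD (N : ℕ) (l : List ℝ) (h : l.length = N) :
    List.ofFn (fun i : Fin N => l.getD i 0) = l := by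
  subst h
  conv_rhs => rw [← List.ofFn_getElem (xs := l)]
  congr 1
  funext i
  rw [List.getD_eq_getElem _ _ i.isLt]

lemma sorted_rank_dom (δ : ℝ) (N : ℕ) (u w : List ℝ) (hu : u.length = N) (hw : w.length = N)
    (e : Equiv.Perm (Fin N)) (he : ∀ i : Fin N, u.getD i 0 + δ ≤ w.getD (e i) 0)
    (k : ℕ) (hk : k < N) :
    (u.insertionSort (· ≤ ·)).getD k 0 + δ ≤ (w.insertionSort (· ≤ ·)).getD k 0 := by
  set a := u.insertionSort (· ≤ ·) with ha
  set b := w.insertionSort (· ≤ ·) with hb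
  have hal : a.length = N := by rw [ha, length_insertionSort, hu]
  have hbl : b.length = N := by rw [hb, length_insertionSort, hw]
  have hka : k < a.length := hal ▸ hk
  have hkb : k < b.length := hbl ▸ hk
  have hsa : a.Pairwise (· ≤ ·) := pairwise_insertionSort _ u
  have hsb : b.Pairwise (· ≤ ·) := pairwise_insertionSort _ w
  rw [List.getD_eq_getElem _ _ hka, List.getD_eq_getElem _ _ hkb]
  by_contra hcon
  push_neg at hcon
  set A := a[k] with hA
  set B := b[k] with hB
  have hpa := List.pairwise_iff_getElem.1 hsa
  have hpb := List.pairwise_iff_getElem.1 hsb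
  -- bound 1 : k + 1 ≤ countP (· ≤ B) b
  have hb1 : k + 1 ≤ b.countP (fun x => x ≤ B) := by
    calc k + 1 = (b.take (k+1)).length := by simp [hkb]
    _ = (b.take (k+1)).countP (fun x => x ≤ B) := by
        symm
        rw [List.countP_eq_length]
        intro x hx
        rw [List.mem_take_iff_getElem] at hx
        obtain ⟨i, hi, rfl⟩ := hx
        simp only [decide_eq_true_eq]
        rcases lt_or_eq_of_le (Nat.lt_succ_iff.1 (lt_min_iff.1 hi).1) with h' | h'
        · exact hpb i k (by omega) hkb h'
        · subst h'; exact le_refl _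
    _ ≤ b.countP (fun x => x ≤ B) := by
        conv_rhs => rw [← List.take_append_drop (k+1) b]
        rw [List.countP_append]
        omega
  -- bound 2 : countP (· < A) a ≤ k
  have ha2 : a.countP (fun x => x < A) ≤ k := by
    conv_lhs => rw [← List.take_append_drop k a]
    rw [List.countP_append]
    have h1 : (a.take k).countP (fun x => x < A) ≤ k := by
      calc (a.take k).countP (fun x => x < A) ≤ (a.take k).length := List.countP_le_length
      _ ≤ k := by simp
    have h2 : (a.drop k).countP (fun x => x < A) = 0 := by
      rw [List.countP_eq_zero]
      intro x hx
      rw [List.mem_iff_getElem] at hx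
      obtain ⟨i, hi, rfl⟩ := hx
      simp only [List.length_drop] at hi
      rw [List.getElem_drop]
      simp only [decide_eq_true_eq, not_lt]
      rcases Nat.eq_or_lt_of_le (Nat.le_add_right k i) with h' | h'
      · obtain rfl : i = 0 := by omega
        simp [hA]
      · exact hpa k (k+i) (by omega) (by omega) h'
    omega
  -- transfer counts through permutation
  have hwof : List.ofFn (fun i : Fin N => w.getD i 0) = w := ofFn_getD N w hw
  have huof : List.ofFn (fun i : Fin N => u.getD i 0) = u := ofFn_getD N u hu
  have hchain : b.countP (fun x => x ≤ B) ≤ a.countP (fun x => x < A) := by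
    have hpb' : b.countP (fun x => x ≤ B) = w.countP (fun x => x ≤ B) :=
      (List.perm_insertionSort _ w).countP_eq _
    have hpa' : a.countP (fun x => x < A) = u.countP (fun x => x < A) :=
      (List.perm_insertionSort _ u).countP_eq _
    rw [hpb', hpa', ← hwof, ← huof]
    have hperm : List.ofFn (fun i : Fin N => w.getD (e i) 0) ~
        List.ofFn (fun i : Fin N => w.getD i 0) :=
      e.ofFn_comp_perm (fun i : Fin N => w.getD i 0)
    rw [← hperm.countP_eq (fun x => x ≤ B)]
    rw [List.ofFn_eq_map, List.ofFn_eq_map, List.countP_map, List.countP_map]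
    apply List.countP_mono_left
    intro i _ hi
    simp only [Function.comp, decide_eq_true_eq] at hi ⊢
    have := he i
    linarith
  omega

theorem trimmed_select_avg_gap (δ : ℝ) (t N : ℕ) (ht : 1 ≤ t) (hN : 2 * t < N)
    (u w : List ℝ) (hu : u.length = N) (hw : w.length = N)
    (h : ∃ e : Equiv.Perm (Fin N),
      ∀ i : Fin N, u.getD i 0 + δ ≤ w.getD (e i) 0) :
    ∀ S : Finset (Fin (N - 2 * t)), S.Nonempty →
      (∑ i ∈ S, (((u.insertionSort (· ≤ ·)).drop t).take (N - 2 * t)).getD i 0) / S.card + δ ≤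
      (∑ i ∈ S, (((w.insertionSort (· ≤ ·)).drop t).take (N - 2 * t)).getD i 0) / S.card := by
  obtain ⟨e, he⟩ := h
  intro S hS
  have key : ∀ i : Fin (N - 2 * t),
      (((u.insertionSort (· ≤ ·)).drop t).take (N - 2 * t)).getD i 0 + δ ≤
      (((w.insertionSort (· ≤ ·)).drop t).take (N - 2 * t)).getD i 0 := by
    intro i
    have hi := i.isLt
    have hlu : (u.insertionSort (· ≤ ·)).length = N := by rw [length_insertionSort, hu]
    have hlw : (w.insertionSort (· ≤ ·)).length = N := by rw [length_insertionSort, hw]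
    have htrim : ∀ (l : List ℝ), l.length = N →
        (((l.drop t).take (N - 2 * t)).getD i 0) = l.getD (t + i) 0 := by
      intro l hl
      rw [List.getD_eq_getElem _ _ (by simp [hl]; omega),
          List.getElem_take, List.getElem_drop,
          List.getD_eq_getElem _ _ (by omega)]
    rw [htrim _ hlu, htrim _ hlw]
    exact sorted_rank_dom δ N u w hu hw e he (t + i) (by omega)
  have hsum : (∑ i ∈ S, (((u.insertionSort (· ≤ ·)).drop t).take (N - 2 * t)).getD i 0)
      + S.card * δ ≤
      ∑ i ∈ S, (((w.insertionSort (· ≤ ·)).drop t).take (N - 2 * t)).getD i 0 := by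
    have := Finset.sum_le_sum (fun i (_ : i ∈ S) => key i)
    rw [Finset.sum_add_distrib, Finset.sum_const, nsmul_eq_mul] at this
    linarith
  have hc : (0 : ℝ) < S.card := by
    exact_mod_cast Finset.card_pos.2 hS
  rw [div_add' _ _ _ hc.ne', div_le_div_iff_of_pos_right hc]
  linarith
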